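/- Let V and W be finite-dimensional vector spaces over an algebraically closed field k of characteristic p > 0. Let A : V → W be a Frobenius-semilinear map (i.e. additive with A(λv) = λ^p A(v)) and B : V → W a k-linear surjective map. Then A - B : V → W is surjective as a map of abelian groups. -/

import Mathlib

open Polynomial Finset

theorem exists_rel {k W : Type*} [Field k] [AddCommGroup W] [Module k W] [FiniteDimensional k W]
    (A : W →+ W) (w : W) :
    ∃ n : ℕ, A^[n+1] w ∈ Submodule.span k (Set.range fun i : Fin (n+1) => A^[i] w) := by
  by_contra h
  push_neg at h
  set U : ℕ → Submodule k W := fun n => Submodule.span k (Set.range fun i : Fin (n+1) => A^[i] w)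
    with hU
  have hlt : ∀ n, U n < U (n+1) := by
    intro n
    refine lt_of_le_of_ne ?_ ?_
    · apply Submodule.span_mono
      rintro x ⟨i, rfl⟩
      exact ⟨i.castSucc, rfl⟩
    · intro he
      apply h n
      have : A^[n+1] w ∈ U (n+1) := Submodule.subset_span ⟨Fin.last (n+1), rfl⟩
      rw [← he] at this
      exact this
  have hsm : StrictMono fun n => Module.finrank k (U n) :=
    strictMono_nat_of_lt_succ fun n => Submodule.finrank_lt_finrank_of_lt (hlt n)
  have h1 := hsm.le_apply (x := Module.finrank k W + 1)
  have h2 : Module.finrank k (U (Module.finrank k W + 1)) ≤ Module.finrank k W :=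
    Submodule.finrank_le _
  omega

theorem key {k : Type*} [Field k] [IsAlgClosed k] {p : ℕ} (hp : p ≠ 0) [CharP k p]
    {W : Type*} [AddCommGroup W] [Module k W] [FiniteDimensional k W]
    (A : W →+ W) (hA : ∀ (c : k) (w : W), A (c • w) = c ^ p • A w) :
    Function.Surjective (fun v => A v - v) := by
  have hpp : p.Prime := (CharP.char_is_prime_or_zero k p).resolve_right hp
  haveI : Fact p.Prime := ⟨hpp⟩
  intro w
  obtain ⟨n, hn⟩ := exists_rel (k := k) A w
  rw [Submodule.mem_span_range_iff_exists_fun] at hn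
  obtain ⟨a, ha⟩ := hn
  set a' : ℕ → k := fun i => if h : i < n+1 then a ⟨i, h⟩ else 0 with ha'
  have hrel : ∑ i ∈ range (n+1), a' i • A^[i] w = A^[n+1] w := by
    rw [← ha, ← Fin.sum_univ_eq_sum_range (fun i => a' i • A^[i] w) (n+1)]
    refine Finset.sum_congr rfl fun i _ => ?_
    simp [ha', i.isLt]
    exact fun h => absurd i.isLt (by omega)
  -- the recursive polynomials
  set D : ℕ → k[X] := fun i =>
    Nat.rec (C (a' 0) * X ^ p - 1) (fun i Di => Di ^ p + C (a' (i+1)) * X ^ p) i with hD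
  have hD0 : D 0 = C (a' 0) * X ^ p - 1 := rfl
  have hDs : ∀ i, D (i+1) = D i ^ p + C (a' (i+1)) * X ^ p := fun i => rfl
  have hcoeff : ∀ i j, ¬ (p ∣ j) → (D i).coeff j = 0 := by
    intro i
    induction i with
    | zero =>
      intro j hj
      have hj0 : j ≠ 0 := fun h => hj (h ▸ dvd_zero p)
      have hjp : j ≠ p := fun h => hj (h ▸ dvd_refl p)
      simp [hD0, coeff_X_pow, coeff_one, hj0, hjp]
    | succ i ih =>
      intro j hj
      rw [hDs, coeff_add, ← map_frobenius_expand p (D i), coeff_map, coeff_expand hpp.pos,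
        if_neg hj, coeff_C_mul, coeff_X_pow, if_neg (fun h : j = p => hj (h ▸ dvd_refl p)),
        mul_zero, map_zero, add_zero]
  -- root of D n - X
  have hco : (D n - X).coeff 1 = -1 := by
    rw [coeff_sub, hcoeff n 1 (fun h => hpp.ne_one (Nat.dvd_one.mp h)), coeff_X_one]
    ring
  have hne : D n - X ≠ 0 := fun h => by simp [h] at hco
  have hdeg : (D n - X).degree ≠ 0 := by
    intro h
    have h1 : (1 : ℕ) ≤ (D n - X).natDegree :=
      le_natDegree_of_ne_zero (by rw [hco]; norm_num)
    rw [Polynomial.degree_eq_natDegree hne] at h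
    simp only [Nat.cast_eq_zero] at h
    omega
  obtain ⟨t, ht⟩ := IsAlgClosed.exists_root _ hdeg
  have htt : (D n).eval t = t := by
    rw [IsRoot, eval_sub, eval_X, sub_eq_zero] at ht
    exact ht
  set c : ℕ → k := fun i => (D i).eval t with hc
  have hc0 : c 0 = a' 0 * t ^ p - 1 := by simp [hc, hD0]
  have hcs : ∀ i, c (i+1) = c i ^ p + a' (i+1) * t ^ p := fun i => by simp [hc, hDs i]
  have hcn : c n = t := htt
  refine ⟨∑ i ∈ range (n+1), c i • A^[i] w, ?_⟩
  show A (∑ i ∈ range (n+1), c i • A^[i] w) - ∑ i ∈ range (n+1), c i • A^[i] w = w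
  rw [sub_eq_iff_eq_add]
  have hAv : A (∑ i ∈ range (n+1), c i • A^[i] w)
      = ∑ i ∈ range (n+1), (c i ^ p) • A^[i+1] w := by
    rw [map_sum]
    refine Finset.sum_congr rfl fun i _ => ?_
    rw [hA, ← Function.iterate_succ_apply' (⇑A) i w]
  rw [hAv, Finset.sum_range_succ, ← hrel, Finset.smul_sum,
    Finset.sum_range_succ' (fun i => (c n ^ p) • (a' i • A^[i] w)) n,
    Finset.sum_range_succ' (fun i => c i • A^[i] w) n]
  simp only [Function.iterate_zero_apply]
  have hterm : ∀ i, c i ^ p • A^[i+1] w + c n ^ p • (a' (i+1) • A^[i+1] w)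
      = c (i+1) • A^[i+1] w := fun i => by
    rw [smul_smul, ← add_smul, hcs i, hcn, mul_comm]
  have hconst : c n ^ p • (a' 0 • w) = w + c 0 • w := by
    rw [smul_smul, hcn, hc0, sub_smul, one_smul, mul_comm]
    abel
  rw [← add_assoc, ← Finset.sum_add_distrib,
    Finset.sum_congr rfl (fun i _ => hterm i), hconst]
  abel

/-- Let `V` and `W` be finite-dimensional vector spaces over an algebraically
closed field `k` of characteristic `p > 0`.  Let `A : V → W` be a Frobenius-semilinear map
(additive with `A (λ • v) = λ^p • A v`) and `B : V → W` a `k`-linear surjective map.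
Then `A - B : V → W` is surjective as a map of abelian groups. -/
theorem stmt0 {k : Type*} [Field k] [IsAlgClosed k] {p : ℕ} (hp : p ≠ 0) [CharP k p]
    {V W : Type*} [AddCommGroup V] [AddCommGroup W] [Module k V] [Module k W]
    [FiniteDimensional k V] [FiniteDimensional k W]
    (A : V →+ W) (hA : ∀ (c : k) (v : V), A (c • v) = c ^ p • A v)
    (B : V →ₗ[k] W) (hB : Function.Surjective B) :
    Function.Surjective (fun v => A v - B v) := by
  obtain ⟨s, hs⟩ := B.exists_rightInverse_of_surjective (LinearMap.range_eq_top.2 hB)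
  set A' : W →+ W := A.comp s.toAddMonoidHom with hA'def
  have hA' : ∀ (c : k) (u : W), A' (c • u) = c ^ p • A' u := fun c u => by
    simp only [hA'def, AddMonoidHom.comp_apply, LinearMap.toAddMonoidHom_coe, map_smul, hA]
  intro w
  obtain ⟨u, hu⟩ := key hp A' hA' w
  refine ⟨s u, ?_⟩
  have hBu : B (s u) = u := LinearMap.congr_fun hs u
  simp only [hA'def, AddMonoidHom.comp_apply, LinearMap.toAddMonoidHom_coe] at hu
  simpa [hBu] using hu
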